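/- For all real p ≥ 1, Γ(p+1) ≤ p^p. -/

import Mathlib

open Real MeasureTheory Set

theorem gamma_succ_le_pow_self (p : ℝ) (hp : 1 ≤ p) :
    Real.Gamma (p + 1) ≤ p ^ p := by
  have hp0 : 0 < p := lt_of_lt_of_le one_pos hp
  set C : ℝ := p ^ (p - 1) * Real.exp (1 - p) with hC
  have hC0 : 0 ≤ C := by positivity
  -- pointwise bound
  have key : ∀ x ∈ Ioi (0:ℝ),
      Real.exp (-x) * x ^ (p + 1 - 1) ≤ C * (x * Real.exp (-(p⁻¹ * x))) := by
    intro x hx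
    have hx0 : 0 < x := hx
    set t : ℝ := x / p with ht
    have ht0 : 0 < t := div_pos hx0 hp0
    have ha0 : 0 < t * Real.exp (-t) := by positivity
    -- t * exp (-t) ≤ exp (-1)
    have h1 : t * Real.exp (-t) ≤ Real.exp (-1) := by
      have := Real.add_one_le_exp (t - 1)
      have h2 : t ≤ Real.exp (t - 1) := by linarith
      calc t * Real.exp (-t) ≤ Real.exp (t - 1) * Real.exp (-t) :=
            mul_le_mul_of_nonneg_right h2 (Real.exp_nonneg _)
        _ = Real.exp (-1) := by rw [← Real.exp_add]; ring_nf
    -- (t e^{-t})^p ≤ e^{1-p} * (t e^{-t})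
    have h3 : (t * Real.exp (-t)) ^ p ≤ Real.exp (1 - p) * (t * Real.exp (-t)) := by
      have : (t * Real.exp (-t)) ^ p = (t * Real.exp (-t)) ^ (p - 1) * (t * Real.exp (-t)) := by
        rw [← Real.rpow_add_one (ne_of_gt ha0)]; ring_nf
      rw [this]
      refine mul_le_mul_of_nonneg_right ?_ ha0.le
      calc (t * Real.exp (-t)) ^ (p - 1) ≤ (Real.exp (-1)) ^ (p - 1) :=
            Real.rpow_le_rpow ha0.le h1 (by linarith)
        _ = Real.exp (1 - p) := by rw [← Real.exp_mul]; ring_nf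
    -- rewrite LHS as p^p * (t e^{-t})^p
    have hLHS : Real.exp (-x) * x ^ (p + 1 - 1) = p ^ p * (t * Real.exp (-t)) ^ p := by
      rw [Real.mul_rpow ht0.le (Real.exp_nonneg _), ht, Real.div_rpow hx0.le hp0.le,
        ← Real.exp_mul, add_sub_cancel_right]
      field_simp
    have hRHS : C * (x * Real.exp (-(p⁻¹ * x))) = p ^ p * (Real.exp (1 - p) * (t * Real.exp (-t))) := by
      rw [hC, ht]
      have hpp : p ^ (p - 1) * p = p ^ p := by
        rw [← Real.rpow_add_one (ne_of_gt hp0)]; ring_nf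
      field_simp
      rw [← hpp]
      ring_nf
    rw [hLHS, hRHS]
    exact mul_le_mul_of_nonneg_left h3 (by positivity)
  -- integrability
  have hint1 : IntegrableOn (fun x => Real.exp (-x) * x ^ (p + 1 - 1)) (Ioi 0) :=
    Real.GammaIntegral_convergent (by linarith)
  have hint2 : IntegrableOn (fun x : ℝ => C * (x * Real.exp (-(p⁻¹ * x)))) (Ioi 0) := by
    refine Integrable.const_mul ?_ C
    have := integrableOn_rpow_mul_exp_neg_mul_rpow (s := 1) (p := 1) (b := p⁻¹)
      (by norm_num) one_pos (inv_pos.2 hp0)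
    refine this.congr_fun (fun x hx => ?_) measurableSet_Ioi
    norm_num [Real.rpow_one]
  -- combine
  rw [Real.Gamma_eq_integral (by linarith : (0:ℝ) < p + 1)]
  calc (∫ x in Ioi (0:ℝ), Real.exp (-x) * x ^ (p + 1 - 1))
      ≤ ∫ x in Ioi (0:ℝ), C * (x * Real.exp (-(p⁻¹ * x))) :=
        setIntegral_mono_on hint1 hint2 measurableSet_Ioi key
    _ = C * ∫ x in Ioi (0:ℝ), x ^ ((2:ℝ) - 1) * Real.exp (-(p⁻¹ * x)) := by
        rw [← integral_const_mul]
        refine setIntegral_congr_fun measurableSet_Ioi (fun x hx => ?_)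
        norm_num
    _ = C * ((1 / p⁻¹) ^ (2:ℝ) * Real.Gamma 2) :=
        by rw [integral_rpow_mul_exp_neg_mul_Ioi two_pos (inv_pos.2 hp0)]
    _ ≤ p ^ p := by
        rw [one_div, inv_inv, Real.Gamma_two, mul_one]
        have hpe : p * Real.exp (1 - p) ≤ 1 := by
          have h2 : p ≤ Real.exp (p - 1) := by
            have := Real.add_one_le_exp (p - 1); linarith
          calc p * Real.exp (1 - p) ≤ Real.exp (p - 1) * Real.exp (1 - p) :=
                mul_le_mul_of_nonneg_right h2 (Real.exp_nonneg _)
            _ = 1 := by rw [← Real.exp_add]; norm_num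
        have hpp : p ^ (p - 1) * p = p ^ p := by
          rw [← Real.rpow_add_one (ne_of_gt hp0)]; ring_nf
        have : C * p ^ (2:ℝ) = p ^ p * (p * Real.exp (1 - p)) := by
          rw [hC, show (2:ℝ) = 1 + 1 by norm_num, Real.rpow_add hp0, Real.rpow_one, ← hpp]
          ring
        rw [this]
        nlinarith [Real.rpow_nonneg hp0.le p]
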